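/- arXiv:1701.04083 — 3 statements merged into one kernel-verified Lean document; each statement's English description precedes it below -/
import Mathlib

section
/- Let k : (0,1] → ℝ be continuous with k > 0 on (0,1], k extending continuously to [0,1] with k(0) = 0, k ∈ C¹((0,1]), and suppose there exists γ ∈ [0,1) with x·k'(x) ≤ γ·k(x) for all x ∈ (0,1]. Then the function x ↦ x²/k(x) is non-decreasing on (0,1], and the improper integral ∫_0^1 r/k(r) dr is finite. -/
open MeasureTheory

/-- Under the degeneracy hypotheses (2.3), `x ↦ x²/k(x)` is non-decreasing on `(0,1]`
and `∫₀¹ r/k(r) dr` is finite. -/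
theorem stmt_4 (k k' : ℝ → ℝ) (γ : ℝ)
    (hkcont : ContinuousOn k (Set.Icc 0 1))
    (hk0 : k 0 = 0)
    (hkpos : ∀ x ∈ Set.Ioc (0:ℝ) 1, 0 < k x)
    (hderiv : ∀ x ∈ Set.Ioc (0:ℝ) 1, HasDerivAt k (k' x) x)
    (hγ0 : 0 ≤ γ) (hγ1 : γ < 1)
    (hcond : ∀ x ∈ Set.Ioc (0:ℝ) 1, x * k' x ≤ γ * k x) :
    (∀ x ∈ Set.Ioc (0:ℝ) 1, ∀ y ∈ Set.Ioc (0:ℝ) 1, x ≤ y →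
        x ^ 2 / k x ≤ y ^ 2 / k y) ∧
    IntegrableOn (fun r => r / k r) (Set.Ioc 0 1) := by
  have hne : ∀ x ∈ Set.Ioc (0:ℝ) 1, k x ≠ 0 := fun x hx => (hkpos x hx).ne'
  have hkIoc : ContinuousOn k (Set.Ioc 0 1) :=
    fun x hx => (hderiv x hx).continuousAt.continuousWithinAt
  have hint : interior (Set.Ioc (0:ℝ) 1) = Set.Ioo 0 1 := interior_Ioc
  -- derivative of g = x^2 / k x
  have hg : ∀ x ∈ Set.Ioc (0:ℝ) 1, HasDerivAt (fun x => x ^ 2 / k x)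
      ((2 * x * k x - x ^ 2 * k' x) / (k x) ^ 2) x := by
    intro x hx
    have h : HasDerivAt (fun x => x ^ 2 / k x)
        (((2:ℕ) * x ^ (2 - 1) * k x - x ^ 2 * k' x) / k x ^ 2) x :=
      (hasDerivAt_pow 2 x).div (hderiv x hx) (hne x hx)
    convert h using 1
    ring_nf
  have hmono : MonotoneOn (fun x => x ^ 2 / k x) (Set.Ioc 0 1) := by
    apply monotoneOn_of_deriv_nonneg (convex_Ioc 0 1)
    · exact (continuousOn_pow 2).div hkIoc hne
    · intro x hx
      rw [hint] at hx
      exact (hg x ⟨hx.1, hx.2.le⟩).differentiableAt.differentiableWithinAt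
    · intro x hx
      rw [hint] at hx
      have hx' : x ∈ Set.Ioc (0:ℝ) 1 := ⟨hx.1, hx.2.le⟩
      rw [(hg x hx').deriv]
      have h1 := hcond x hx'
      have hkp := hkpos x hx'
      have hx0 := hx.1
      apply div_nonneg _ (sq_nonneg _)
      have h2 : x * (x * k' x) ≤ x * (γ * k x) := mul_le_mul_of_nonneg_left h1 hx0.le
      nlinarith [mul_pos hx0 hkp]
  refine ⟨fun x hx y hy hxy => hmono hx hy hxy, ?_⟩
  -- k x / x^γ is antitone, giving k x ≥ k 1 * x^γ
  have hh : ∀ x ∈ Set.Ioc (0:ℝ) 1, HasDerivAt (fun x => k x / x ^ γ)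
      ((k' x * x ^ γ - k x * (γ * x ^ (γ - 1))) / (x ^ γ) ^ 2) x := by
    intro x hx
    have hp : HasDerivAt (fun x : ℝ => x ^ γ) (γ * x ^ (γ - 1)) x :=
      Real.hasDerivAt_rpow_const (Or.inl hx.1.ne')
    exact (hderiv x hx).div hp (Real.rpow_pos_of_pos hx.1 γ).ne'
  have hanti : AntitoneOn (fun x => k x / x ^ γ) (Set.Ioc 0 1) := by
    apply antitoneOn_of_deriv_nonpos (convex_Ioc 0 1)
    · exact hkIoc.div
        (fun x _ => (Real.continuousAt_rpow_const x γ (Or.inr hγ0)).continuousWithinAt)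
        (fun x hx => (Real.rpow_pos_of_pos hx.1 γ).ne')
    · intro x hx
      rw [hint] at hx
      exact (hh x ⟨hx.1, hx.2.le⟩).differentiableAt.differentiableWithinAt
    · intro x hx
      rw [hint] at hx
      have hx' : x ∈ Set.Ioc (0:ℝ) 1 := ⟨hx.1, hx.2.le⟩
      rw [(hh x hx').deriv]
      apply div_nonpos_of_nonpos_of_nonneg _ (sq_nonneg _)
      have hxg : x ^ γ = x * x ^ (γ - 1) := by
        rw [show γ = 1 + (γ - 1) by ring, Real.rpow_add hx.1, Real.rpow_one]
        ring_nf
      have hpos : (0:ℝ) ≤ x ^ (γ - 1) := (Real.rpow_pos_of_pos hx.1 _).le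
      have h1 := hcond x hx'
      calc k' x * x ^ γ - k x * (γ * x ^ (γ - 1))
          = x ^ (γ - 1) * (x * k' x - γ * k x) := by rw [hxg]; ring
        _ ≤ 0 := mul_nonpos_of_nonneg_of_nonpos hpos (by linarith)
  have hk1 : 0 < k 1 := hkpos 1 ⟨one_pos, le_rfl⟩
  have hlower : ∀ x ∈ Set.Ioc (0:ℝ) 1, k 1 * x ^ γ ≤ k x := by
    intro x hx
    have := hanti hx (Set.mem_Ioc.mpr ⟨one_pos, le_rfl⟩) hx.2
    simp only [Real.one_rpow, div_one] at this
    calc k 1 * x ^ γ ≤ (k x / x ^ γ) * x ^ γ := by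
          apply mul_le_mul_of_nonneg_right this (Real.rpow_pos_of_pos hx.1 γ).le
      _ = k x := div_mul_cancel₀ _ (Real.rpow_pos_of_pos hx.1 γ).ne'
  -- integrability via comparison with r^(1-γ)/k 1
  have hbound : IntegrableOn (fun r : ℝ => r ^ (1 - γ) / k 1) (Set.Ioc 0 1) := by
    have : IntervalIntegrable (fun r : ℝ => r ^ (1 - γ)) volume 0 1 :=
      intervalIntegral.intervalIntegrable_rpow' (by linarith)
    exact ((intervalIntegrable_iff_integrableOn_Ioc_of_le zero_le_one).mp this).div_const _
  apply MeasureTheory.Integrable.mono' hbound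
  · exact (continuousOn_id.div hkIoc hne).aestronglyMeasurable measurableSet_Ioc
  · rw [ae_restrict_iff' measurableSet_Ioc]
    filter_upwards with r hr
    have hkp := hkpos r hr
    have hlow := hlower r hr
    have hr0 := hr.1
    have hrg : (0:ℝ) < r ^ γ := Real.rpow_pos_of_pos hr0 γ
    rw [Real.norm_eq_abs, abs_of_nonneg (div_nonneg hr0.le hkp.le)]
    have h1 : r / k r ≤ r / (k 1 * r ^ γ) :=
      div_le_div_of_nonneg_left hr0.le (by positivity) hlow
    have h2 : r / (k 1 * r ^ γ) = r ^ (1 - γ) / k 1 := by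
      rw [Real.rpow_sub hr0, Real.rpow_one, div_div, mul_comm]
    linarith [h1, h2.le]
end

section
/- Let ψ₂(x) = λ₂(∫_0^x r/k₂(r) dr − d₂) and Ψ(x) = e^{κσ(x)} − e^{2κ‖σ‖_∞}, with σ as in (2.14), 0 ≤ σ ≤ ‖σ‖_∞, and suppose λ₂ ∈ [ k₂(1)(2−γ)(e^{2κ‖σ‖_∞} − 1)/(d₂k₂(1)(2−γ) − 1), 4(e^{2κ‖σ‖_∞} − e^{κ‖σ‖_∞})/(3d₂) ), where ∫_0^1 r/k₂(r) dr ≤ 1/(k₂(1)(2−γ)) and d₂ ≥ 5/(k₂(1)(2−γ)). Then (4/3)Ψ(x) < ψ₂(x) ≤ Ψ(x) for all x ∈ [0,1]. -/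
open MeasureTheory

/-- The sandwich inequality `(4/3)Ψ < ψ₂ ≤ Ψ` on `[0,1]` (second part of (2.23)). -/
theorem stmt_9 (k2fun σ : ℝ → ℝ) (k2 γ d2 lam2 κ M : ℝ)
    (hk2 : 0 < k2) (hγ0 : 0 ≤ γ) (hγ1 : γ < 1)
    (hM : 0 < M) (hκ : κ ≥ 4 * Real.log 2 / M)
    (hσ : ∀ x ∈ Set.Icc (0:ℝ) 1, 0 ≤ σ x ∧ σ x ≤ M)
    (hd2 : d2 ≥ 5 / (k2 * (2 - γ)))
    (hk2pos : ∀ x ∈ Set.Ioc (0:ℝ) 1, 0 < k2fun x)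
    (hint : IntervalIntegrable (fun r => r / k2fun r) volume 0 1)
    (hintbound : ∀ x ∈ Set.Icc (0:ℝ) 1,
        0 ≤ (∫ r in (0:ℝ)..x, r / k2fun r) ∧
        (∫ r in (0:ℝ)..x, r / k2fun r) ≤ 1 / (k2 * (2 - γ)))
    (hlam2lb : lam2 ≥ k2 * (2 - γ) * (Real.exp (2 * κ * M) - 1) / (d2 * k2 * (2 - γ) - 1))
    (hlam2ub : lam2 < 4 * (Real.exp (2 * κ * M) - Real.exp (κ * M)) / (3 * d2)) :
    ∀ x ∈ Set.Icc (0:ℝ) 1,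
      (4 / 3) * (Real.exp (κ * σ x) - Real.exp (2 * κ * M))
          < lam2 * ((∫ r in (0:ℝ)..x, r / k2fun r) - d2) ∧
      lam2 * ((∫ r in (0:ℝ)..x, r / k2fun r) - d2)
          ≤ Real.exp (κ * σ x) - Real.exp (2 * κ * M) := by
  intro x hx
  have hγ2 : 0 < 2 - γ := by linarith
  have hkγ : 0 < k2 * (2 - γ) := by positivity
  have hcpos : 0 < 1 / (k2 * (2 - γ)) := by positivity
  have hκpos : 0 < κ := by
    have h2 : 0 < Real.log 2 := Real.log_pos (by norm_num)
    have : 0 < 4 * Real.log 2 / M := by positivity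
    linarith
  obtain ⟨hσ0, hσM⟩ := hσ x hx
  obtain ⟨hI0, hIc⟩ := hintbound x hx
  set I := (∫ r in (0:ℝ)..x, r / k2fun r) with hI
  have he1 : 1 ≤ Real.exp (κ * σ x) := Real.one_le_exp (by positivity)
  have he12 : Real.exp (κ * σ x) ≤ Real.exp (κ * M) :=
    Real.exp_le_exp.mpr (by nlinarith)
  have he23 : Real.exp (κ * M) < Real.exp (2 * κ * M) :=
    Real.exp_lt_exp.mpr (by nlinarith)
  have he3 : 1 < Real.exp (2 * κ * M) := by
    rw [show (1:ℝ) = Real.exp 0 from Real.exp_zero.symm]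
    exact Real.exp_lt_exp.mpr (by positivity)
  -- d2 bounds
  have hd2' : d2 ≥ 5 / (k2 * (2 - γ)) := hd2
  have hdc : 0 < d2 - 1 / (k2 * (2 - γ)) := by
    have : 5 / (k2 * (2 - γ)) = 5 * (1 / (k2 * (2 - γ))) := by ring
    nlinarith
  have hd2pos : 0 < d2 := by nlinarith
  have hden : 0 < d2 * k2 * (2 - γ) - 1 := by
    have h1 : d2 * (k2 * (2 - γ)) - 1 > 0 := by
      have := mul_lt_mul_of_pos_right hdc hkγ
      rw [sub_mul, one_div, inv_mul_cancel₀ (ne_of_gt hkγ)] at this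
      linarith [this]
    nlinarith [h1]
  -- rewrite the lower bound on lam2
  have hkey : k2 * (2 - γ) * (Real.exp (2 * κ * M) - 1) / (d2 * k2 * (2 - γ) - 1)
      = (Real.exp (2 * κ * M) - 1) / (d2 - 1 / (k2 * (2 - γ))) := by
    rw [div_eq_div_iff (ne_of_gt hden) (ne_of_gt hdc)]
    field_simp
  have hlam2lb' : lam2 * (d2 - 1 / (k2 * (2 - γ))) ≥ Real.exp (2 * κ * M) - 1 := by
    rw [hkey] at hlam2lb
    calc Real.exp (2 * κ * M) - 1
        = (Real.exp (2 * κ * M) - 1) / (d2 - 1 / (k2 * (2 - γ)))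
          * (d2 - 1 / (k2 * (2 - γ))) := (div_mul_cancel₀ _ (ne_of_gt hdc)).symm
      _ ≤ lam2 * (d2 - 1 / (k2 * (2 - γ))) :=
          mul_le_mul_of_nonneg_right hlam2lb (le_of_lt hdc)
  have hlam2pos : 0 < lam2 := by
    rw [hkey] at hlam2lb
    have : 0 < (Real.exp (2 * κ * M) - 1) / (d2 - 1 / (k2 * (2 - γ))) := by
      apply div_pos <;> linarith
    linarith
  have hlam2ub' : lam2 * (3 * d2) < 4 * (Real.exp (2 * κ * M) - Real.exp (κ * M)) := by
    have h3d : 0 < 3 * d2 := by linarith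
    calc lam2 * (3 * d2)
        < 4 * (Real.exp (2 * κ * M) - Real.exp (κ * M)) / (3 * d2) * (3 * d2) :=
          mul_lt_mul_of_pos_right hlam2ub h3d
      _ = 4 * (Real.exp (2 * κ * M) - Real.exp (κ * M)) := by field_simp
  constructor
  · have h0 : 0 ≤ lam2 * I := mul_nonneg (le_of_lt hlam2pos) hI0
    linarith [h0, hlam2ub', he12]
  · have h1 : lam2 * I ≤ lam2 * (1 / (k2 * (2 - γ))) :=
      mul_le_mul_of_nonneg_left hIc (le_of_lt hlam2pos)
    have h2 : lam2 * (d2 - 1 / (k2 * (2 - γ)))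
        = lam2 * d2 - lam2 * (1 / (k2 * (2 - γ))) := by ring
    linarith [h1, hlam2lb', he1]
end

section
/- (Hardy–Poincaré type inequality for degenerate weights.) Let k ∈ C([0,1]) be positive on (0,1] with k(0) = 0, and assume x·k'(x) ≤ γ·k(x) on (0,1] for some γ ∈ [0,1). Then there exists a constant C_HP > 0 such that for every locally absolutely continuous function w on [0,1] with w(0) = w(1) = 0 and ∫_0^1 k(x) w'(x)² dx < ∞, one has ∫_0^1 (k(x)/x²) w(x)² dx ≤ C_HP ∫_0^1 k(x) w'(x)² dx. -/
open MeasureTheory Set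
open scoped ENNReal NNReal Interval

lemma hp_mono (k k' : ℝ → ℝ) (γ : ℝ)
    (hkcont : ContinuousOn k (Set.Icc 0 1))
    (hderiv : ∀ x ∈ Set.Ioc (0:ℝ) 1, HasDerivAt k (k' x) x)
    (hcond : ∀ x ∈ Set.Ioc (0:ℝ) 1, x * k' x ≤ γ * k x) :
    ∀ x ∈ Set.Ioc (0:ℝ) 1, ∀ t ∈ Set.Ioc (0:ℝ) x, k x * t ^ γ ≤ k t * x ^ γ := by
  have hD : ∀ y ∈ Set.Ioo (0:ℝ) 1, HasDerivAt (fun y : ℝ => k y * y ^ (-γ))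
      (k' y * y ^ (-γ) + k y * (-γ * y ^ (-γ - 1))) y := by
    intro y hy
    exact (hderiv y ⟨hy.1, hy.2.le⟩).mul (Real.hasDerivAt_rpow_const (Or.inl hy.1.ne'))
  have hanti : AntitoneOn (fun y : ℝ => k y * y ^ (-γ)) (Set.Ioc 0 1) := by
    apply antitoneOn_of_deriv_nonpos (convex_Ioc 0 1)
    · exact (hkcont.mono Set.Ioc_subset_Icc_self).mul
        (ContinuousOn.rpow_const continuousOn_id (fun y hy => Or.inl (ne_of_gt hy.1)))
    · rw [interior_Ioc]
      exact fun y hy => (hD y hy).differentiableAt.differentiableWithinAt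
    · rw [interior_Ioc]
      intro y hy
      rw [(hD y hy).deriv]
      have hy0 : (0:ℝ) < y := hy.1
      have h2 : y ^ (-γ) = y * y ^ (-γ - 1) := by
        rw [show (-γ : ℝ) = 1 + (-γ - 1) by ring, Real.rpow_add hy0, Real.rpow_one,
          show (1 : ℝ) + (-γ - 1) - 1 = -γ - 1 by ring]
      rw [h2]
      have h3 : (0:ℝ) ≤ y ^ (-γ - 1) := (Real.rpow_pos_of_pos hy0 _).le
      have h4 := hcond y ⟨hy.1, hy.2.le⟩
      nlinarith [mul_nonneg (sub_nonneg.2 h4) h3]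
  intro x hx t ht
  have htI : t ∈ Set.Ioc (0:ℝ) 1 := ⟨ht.1, ht.2.trans hx.2⟩
  have := hanti htI hx ht.2
  simp only at this
  rw [Real.rpow_neg hx.1.le, Real.rpow_neg ht.1.le, ← div_eq_mul_inv, ← div_eq_mul_inv] at this
  rw [div_le_div_iff₀ (Real.rpow_pos_of_pos hx.1 γ) (Real.rpow_pos_of_pos ht.1 γ)] at this
  exact this

set_option maxHeartbeats 1000000 in
/-- Hardy–Poincaré type inequality for degenerate weights. -/
theorem stmt_13 (k k' : ℝ → ℝ) (γ : ℝ)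
    (hkcont : ContinuousOn k (Set.Icc 0 1))
    (hk0 : k 0 = 0)
    (hkpos : ∀ x ∈ Set.Ioc (0:ℝ) 1, 0 < k x)
    (hderiv : ∀ x ∈ Set.Ioc (0:ℝ) 1, HasDerivAt k (k' x) x)
    (hγ0 : 0 ≤ γ) (hγ1 : γ < 1)
    (hcond : ∀ x ∈ Set.Ioc (0:ℝ) 1, x * k' x ≤ γ * k x) :
    ∃ C > (0:ℝ), ∀ w w' : ℝ → ℝ,
      (∀ x ∈ Set.Ioo (0:ℝ) 1, HasDerivAt w (w' x) x) →
      ContinuousOn w (Set.Icc 0 1) →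
      w 0 = 0 → w 1 = 0 →
      IntegrableOn (fun x => k x * (w' x) ^ 2) (Set.Ioo 0 1) →
      ∫ x in Set.Ioo (0:ℝ) 1, (k x / x ^ 2) * (w x) ^ 2
        ≤ C * ∫ x in Set.Ioo (0:ℝ) 1, k x * (w' x) ^ 2 := by
  set σ : ℝ := (1 - γ) / 2 with hσdef
  have hσ : 0 < σ := by simp only [hσdef]; linarith
  have hσγ : σ + γ = 1 - σ := by simp only [hσdef]; ring
  have hσγ1 : -1 < -σ - γ := by simp only [hσdef]; linarith
  -- the key pointwise comparison
  have key : ∀ x ∈ Set.Ioc (0:ℝ) 1, ∀ t ∈ Set.Ioc (0:ℝ) x,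
      t ^ (-σ) / k t ≤ x ^ γ / k x * t ^ (-σ - γ) := by
    intro x hx t ht
    have hkx : 0 < k x := hkpos x hx
    have hkt : 0 < k t := hkpos t ⟨ht.1, ht.2.trans hx.2⟩
    have h1 := hp_mono k k' γ hkcont hderiv hcond x hx t ht
    have base : t ^ γ / k t ≤ x ^ γ / k x := by
      rw [div_le_div_iff₀ hkt hkx]; nlinarith [h1]
    have e : t ^ (-σ) = t ^ (-σ - γ) * t ^ γ := by
      rw [← Real.rpow_add ht.1]; ring_nf
    calc t ^ (-σ) / k t = t ^ (-σ - γ) * (t ^ γ / k t) := by rw [e]; ring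
      _ ≤ t ^ (-σ - γ) * (x ^ γ / k x) :=
          mul_le_mul_of_nonneg_left base (Real.rpow_pos_of_pos ht.1 _).le
      _ = x ^ γ / k x * t ^ (-σ - γ) := by ring
  refine ⟨1 / σ ^ 2, by positivity, ?_⟩
  intro w w' hw hwc hw0 hw1 hint
  have hIoo : Set.Ioo (0:ℝ) 1 ⊆ Set.Ioc (0:ℝ) 1 := Set.Ioo_subset_Ioc_self
  have hkIoo : ∀ x ∈ Set.Ioo (0:ℝ) 1, 0 < k x := fun x hx => hkpos x (hIoo hx)
  -- measurability
  have hkm : AEMeasurable k (volume.restrict (Set.Ioo (0:ℝ) 1)) :=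
    (hkcont.mono Set.Ioo_subset_Icc_self).aemeasurable measurableSet_Ioo
  have hw'ae : w' =ᵐ[volume.restrict (Set.Ioo (0:ℝ) 1)] deriv w :=
    (ae_restrict_iff' measurableSet_Ioo).2 (ae_of_all _ fun x hx => ((hw x hx).deriv).symm)
  have hw'm : AEMeasurable w' (volume.restrict (Set.Ioo (0:ℝ) 1)) :=
    (measurable_deriv w).aemeasurable.congr hw'ae.symm
  have hwm : AEMeasurable w (volume.restrict (Set.Ioo (0:ℝ) 1)) :=
    (hwc.mono Set.Ioo_subset_Icc_self).aemeasurable measurableSet_Ioo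
  -- integrability of w' near 0
  have hrpow : ∀ x ∈ Set.Ioo (0:ℝ) 1, IntegrableOn (fun t : ℝ => t ^ (-σ - γ)) (Set.Ioo 0 x) := by
    intro x hx
    have h1 : IntervalIntegrable (fun t : ℝ => t ^ (-σ - γ)) volume 0 x :=
      intervalIntegral.intervalIntegrable_rpow' hσγ1
    rw [intervalIntegrable_iff, uIoc_of_le hx.1.le] at h1
    exact h1.mono_set Set.Ioo_subset_Ioc_self
  have hw'int : ∀ x ∈ Set.Ioo (0:ℝ) 1, IntegrableOn w' (Set.Ioo 0 x) := by
    intro x hx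
    have hM : IntegrableOn
        (fun t => (k t * w' t ^ 2 + x ^ γ / k x * t ^ (-σ - γ)) / 2) (Set.Ioo 0 x) := by
      apply Integrable.div_const
      exact ((hint.mono_set (Set.Ioo_subset_Ioo le_rfl hx.2.le)).add
        ((hrpow x hx).const_mul _))
    apply Integrable.mono' hM
    · exact (hw'm.mono_measure
        (Measure.restrict_mono (Set.Ioo_subset_Ioo le_rfl hx.2.le) le_rfl)).aestronglyMeasurable
    · refine (ae_restrict_iff' measurableSet_Ioo).2 (ae_of_all _ fun t ht => ?_)
      have ht0 : 0 < t := ht.1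
      have htx : t < x := ht.2
      have hkt : 0 < k t := hkIoo t ⟨ht0, htx.trans hx.2⟩
      set A := k t * t ^ σ * w' t ^ 2 with hA
      set B := t ^ (-σ) / k t with hB
      have htσ : t ^ σ * t ^ (-σ) = 1 := by
        rw [← Real.rpow_add ht0]; simp
      have hAB : A * B = w' t ^ 2 := by
        calc A * B = (t ^ σ * t ^ (-σ)) * (k t / k t) * w' t ^ 2 := by rw [hA, hB]; ring
          _ = w' t ^ 2 := by rw [htσ, div_self hkt.ne']; ring
      have hA0 : 0 ≤ A := by positivity
      have hB0 : 0 ≤ B := by positivity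
      have habs : |w' t| ≤ (A + B) / 2 := by
        nlinarith [sq_nonneg (A - B), abs_nonneg (w' t), sq_abs (w' t)]
      have hA2 : A ≤ k t * w' t ^ 2 := by
        have h5 : t ^ σ ≤ 1 := Real.rpow_le_one ht0.le (by linarith [hx.2]) hσ.le
        have h6 : k t * t ^ σ ≤ k t := mul_le_of_le_one_right hkt.le h5
        rw [hA]
        exact mul_le_mul_of_nonneg_right h6 (sq_nonneg _)
      have hB2 : B ≤ x ^ γ / k x * t ^ (-σ - γ) :=
        key x (hIoo hx) t ⟨ht0, htx.le⟩
      have : |w' t| ≤ (k t * w' t ^ 2 + x ^ γ / k x * t ^ (-σ - γ)) / 2 := by linarith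
      simpa [Real.norm_eq_abs] using this
  -- fundamental theorem of calculus
  have hftc : ∀ x ∈ Set.Ioo (0:ℝ) 1, w x = ∫ t in Set.Ioo (0:ℝ) x, w' t := by
    intro x hx
    have h1 : ∫ t in (0:ℝ)..x, w' t = w x - w 0 := by
      apply intervalIntegral.integral_eq_sub_of_hasDeriv_right_of_le hx.1.le
        (hwc.mono (Set.Icc_subset_Icc le_rfl hx.2.le))
        (fun t ht => (hw t ⟨ht.1, ht.2.trans hx.2⟩).hasDerivWithinAt)
      rw [intervalIntegrable_iff, uIoc_of_le hx.1.le]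
      exact (integrableOn_Ioc_iff_integrableOn_Ioo (by simp)).2 (hw'int x hx)
    rw [hw0, sub_zero] at h1
    rw [← h1, intervalIntegral.integral_of_le hx.1.le, integral_Ioc_eq_integral_Ioo]
  -- measurable rpow
  have hrpm : ∀ r : ℝ, Measurable fun t : ℝ => t ^ r := fun r => by measurability
  -- measurable representative of the RHS integrand (with weight t ^ σ)
  have hφm : AEMeasurable (fun t => ENNReal.ofReal (k t * w' t ^ 2 * t ^ σ))
      (volume.restrict (Set.Ioo (0:ℝ) 1)) :=
    ENNReal.measurable_ofReal.comp_aemeasurable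
      ((hkm.mul (hw'm.pow_const 2)).mul (hrpm σ).aemeasurable)
  obtain ⟨φ₀, hφ₀meas, hφ₀eq⟩ : ∃ φ₀ : ℝ → ℝ≥0∞, Measurable φ₀ ∧
      (fun t => ENNReal.ofReal (k t * w' t ^ 2 * t ^ σ)) =ᵐ[volume.restrict (Set.Ioo (0:ℝ) 1)] φ₀ :=
    ⟨hφm.mk _, hφm.measurable_mk, hφm.ae_eq_mk⟩
  have hc : Measurable fun x : ℝ => ENNReal.ofReal (x ^ (-1 - σ) / σ) :=
    ((hrpm _).div_const σ).ennreal_ofReal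
  -- pointwise (in x) estimate via Cauchy-Schwarz
  have step1 : ∀ x ∈ Set.Ioo (0:ℝ) 1,
      ENNReal.ofReal ((k x / x ^ 2) * w x ^ 2)
        ≤ ENNReal.ofReal (x ^ (-1 - σ) / σ) * ∫⁻ t in Set.Ioo 0 x, φ₀ t := by
    intro x hx
    have hx0 : (0:ℝ) < x := hx.1
    have hkx : 0 < k x := hkIoo x hx
    have hsub : Set.Ioo (0:ℝ) x ⊆ Set.Ioo (0:ℝ) 1 := Set.Ioo_subset_Ioo le_rfl hx.2.le
    have hBeq : ∫⁻ t in Set.Ioo (0:ℝ) x, φ₀ t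
        = ∫⁻ t in Set.Ioo (0:ℝ) x, ENNReal.ofReal (k t * w' t ^ 2 * t ^ σ) :=
      lintegral_congr_ae ((hφ₀eq.filter_mono (ae_mono (Measure.restrict_mono hsub le_rfl))).symm)
    rw [hBeq]
    set Bx := ∫⁻ t in Set.Ioo (0:ℝ) x, ENNReal.ofReal (k t * w' t ^ 2 * t ^ σ) with hBx
    set Ax := ∫⁻ t in Set.Ioo (0:ℝ) x, ENNReal.ofReal (t ^ (-σ) / k t) with hAx
    -- bound on Ax
    have hA : Ax ≤ ENNReal.ofReal (x ^ γ / k x * (x ^ σ / σ)) := by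
      have hintA : IntegrableOn (fun t : ℝ => x ^ γ / k x * t ^ (-σ - γ)) (Set.Ioo 0 x) :=
        (hrpow x hx).const_mul _
      calc Ax ≤ ∫⁻ t in Set.Ioo (0:ℝ) x, ENNReal.ofReal (x ^ γ / k x * t ^ (-σ - γ)) :=
            setLIntegral_mono' measurableSet_Ioo (fun t ht =>
              ENNReal.ofReal_le_ofReal (key x (hIoo hx) t ⟨ht.1, ht.2.le⟩))
        _ = ENNReal.ofReal (∫ t in Set.Ioo (0:ℝ) x, x ^ γ / k x * t ^ (-σ - γ)) :=
            (ofReal_integral_eq_lintegral_ofReal hintA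
              ((ae_restrict_iff' measurableSet_Ioo).2 (ae_of_all _ fun t ht =>
                mul_nonneg (div_nonneg (Real.rpow_pos_of_pos hx0 _).le hkx.le)
                  (Real.rpow_pos_of_pos ht.1 _).le))).symm
        _ = ENNReal.ofReal (x ^ γ / k x * (x ^ σ / σ)) := by
            rw [integral_const_mul]
            congr 1
            have hne : (-σ - γ + 1) ≠ 0 := by rw [hσdef]; intro h; linarith [h]
            rw [← integral_Ioc_eq_integral_Ioo, ← intervalIntegral.integral_of_le hx0.le,
              integral_rpow (Or.inl hσγ1), Real.zero_rpow hne,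
              show -σ - γ + 1 = σ by rw [hσdef]; ring, sub_zero]
    -- Cauchy-Schwarz bound
    have hkmx : AEMeasurable k (volume.restrict (Set.Ioo (0:ℝ) x)) :=
      hkm.mono_measure (Measure.restrict_mono hsub le_rfl)
    have hw'mx : AEMeasurable w' (volume.restrict (Set.Ioo (0:ℝ) x)) :=
      hw'm.mono_measure (Measure.restrict_mono hsub le_rfl)
    have hFm : AEMeasurable (fun t => ENNReal.ofReal (Real.sqrt (k t * t ^ σ) * |w' t|))
        (volume.restrict (Set.Ioo (0:ℝ) x)) :=
      ENNReal.measurable_ofReal.comp_aemeasurable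
        ((Real.continuous_sqrt.measurable.comp_aemeasurable (hkmx.mul (hrpm σ).aemeasurable)).mul (_root_.continuous_abs.measurable.comp_aemeasurable hw'mx))
    have hGm : AEMeasurable (fun t => ENNReal.ofReal (Real.sqrt (t ^ (-σ) / k t)))
        (volume.restrict (Set.Ioo (0:ℝ) x)) :=
      ENNReal.measurable_ofReal.comp_aemeasurable
        (Real.continuous_sqrt.measurable.comp_aemeasurable ((hrpm (-σ)).aemeasurable.div hkmx))
    have hCS := ENNReal.lintegral_mul_le_Lp_mul_Lq (volume.restrict (Set.Ioo (0:ℝ) x))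
      (⟨by norm_num, by norm_num, by norm_num⟩ : Real.HolderConjugate 2 2) hFm hGm
    have eFG : ∫⁻ t in Set.Ioo (0:ℝ) x,
        ((fun t => ENNReal.ofReal (Real.sqrt (k t * t ^ σ) * |w' t|)) *
          (fun t => ENNReal.ofReal (Real.sqrt (t ^ (-σ) / k t)))) t
        = ∫⁻ t in Set.Ioo (0:ℝ) x, ENNReal.ofReal |w' t| := by
      apply setLIntegral_congr_fun measurableSet_Ioo
      intro t ht
      have ht0 : (0:ℝ) < t := ht.1
      have hkt : 0 < k t := hkIoo t (hsub ht)
      have htσ : t ^ σ * t ^ (-σ) = 1 := by rw [← Real.rpow_add ht0]; simp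
      have hab : (k t * t ^ σ) * (t ^ (-σ) / k t) = 1 := by
        field_simp
        linear_combination htσ
      simp only [Pi.mul_apply]
      rw [← ENNReal.ofReal_mul (by positivity)]
      congr 1
      rw [mul_comm (Real.sqrt (k t * t ^ σ)) |w' t|, mul_assoc,
        ← Real.sqrt_mul (by positivity), hab, Real.sqrt_one, mul_one]
    have eF2 : ∫⁻ t in Set.Ioo (0:ℝ) x,
        (fun t => ENNReal.ofReal (Real.sqrt (k t * t ^ σ) * |w' t|)) t ^ (2:ℝ) = Bx := by
      apply setLIntegral_congr_fun measurableSet_Ioo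
      intro t ht
      have ht0 : (0:ℝ) < t := ht.1
      have hkt : 0 < k t := hkIoo t (hsub ht)
      dsimp only
      rw [ENNReal.ofReal_rpow_of_nonneg (by positivity) (by norm_num)]
      congr 1
      rw [show ((2:ℝ)) = ((2:ℕ):ℝ) by norm_num, Real.rpow_natCast]
      rw [mul_pow, Real.sq_sqrt (by positivity), sq_abs]
      ring
    have eG2 : ∫⁻ t in Set.Ioo (0:ℝ) x,
        (fun t => ENNReal.ofReal (Real.sqrt (t ^ (-σ) / k t))) t ^ (2:ℝ) = Ax := by
      apply setLIntegral_congr_fun measurableSet_Ioo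
      intro t ht
      have ht0 : (0:ℝ) < t := ht.1
      have hkt : 0 < k t := hkIoo t (hsub ht)
      dsimp only
      rw [ENNReal.ofReal_rpow_of_nonneg (by positivity) (by norm_num)]
      congr 1
      rw [show ((2:ℝ)) = ((2:ℕ):ℝ) by norm_num, Real.rpow_natCast]
      rw [Real.sq_sqrt (by positivity)]
    rw [eFG, eF2, eG2] at hCS
    have h7 : ENNReal.ofReal |w x| ≤ Bx ^ ((1:ℝ)/2) * Ax ^ ((1:ℝ)/2) := by
      have h7a : |w x| ≤ ∫ t in Set.Ioo (0:ℝ) x, |w' t| := by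
        rw [hftc x hx]
        simpa [Real.norm_eq_abs] using
          norm_integral_le_integral_norm (μ := volume.restrict (Set.Ioo (0:ℝ) x)) w'
      calc ENNReal.ofReal |w x| ≤ ENNReal.ofReal (∫ t in Set.Ioo (0:ℝ) x, |w' t|) :=
            ENNReal.ofReal_le_ofReal h7a
        _ = ∫⁻ t in Set.Ioo (0:ℝ) x, ENNReal.ofReal |w' t| :=
            ofReal_integral_eq_lintegral_ofReal (hw'int x hx).abs
              (ae_of_all _ fun t => abs_nonneg _)
        _ ≤ Bx ^ ((1:ℝ)/2) * Ax ^ ((1:ℝ)/2) := hCS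
    have hsq : ∀ P : ℝ≥0∞, (P ^ ((1:ℝ)/2)) ^ (2:ℕ) = P := fun P => by
      rw [← ENNReal.rpow_natCast, ← ENNReal.rpow_mul]; norm_num
    have hx2 : ENNReal.ofReal (w x ^ 2) ≤ Bx * Ax := by
      have e1 : ENNReal.ofReal (w x ^ 2) = ENNReal.ofReal |w x| ^ (2:ℕ) := by
        rw [← ENNReal.ofReal_pow (abs_nonneg _), sq_abs]
      rw [e1]
      calc ENNReal.ofReal |w x| ^ (2:ℕ) ≤ (Bx ^ ((1:ℝ)/2) * Ax ^ ((1:ℝ)/2)) ^ (2:ℕ) := by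
            rw [sq, sq]; exact mul_le_mul' h7 h7
        _ = Bx * Ax := by rw [mul_pow, hsq, hsq]
    -- arithmetic for the weights
    have hpw : x ^ γ * x ^ σ = x ^ (-1 - σ) * x ^ (2:ℕ) := by
      rw [← Real.rpow_add hx0, ← Real.rpow_natCast x 2, ← Real.rpow_add hx0]
      congr 1
      push_cast
      linarith [hσγ]
    have harith : k x / x ^ 2 * (x ^ γ / k x * (x ^ σ / σ)) = x ^ (-1 - σ) / σ := by
      have hx2 : (x:ℝ) ^ 2 ≠ 0 := by positivity
      field_simp
      linear_combination hpw
    calc ENNReal.ofReal ((k x / x ^ 2) * w x ^ 2)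
        = ENNReal.ofReal (k x / x ^ 2) * ENNReal.ofReal (w x ^ 2) :=
          ENNReal.ofReal_mul (by positivity)
      _ ≤ ENNReal.ofReal (k x / x ^ 2) * (Bx * ENNReal.ofReal (x ^ γ / k x * (x ^ σ / σ))) :=
          mul_le_mul_right (hx2.trans (mul_le_mul_right hA Bx)) _
      _ = ENNReal.ofReal (k x / x ^ 2) * ENNReal.ofReal (x ^ γ / k x * (x ^ σ / σ)) * Bx := by
          rw [mul_comm Bx, ← mul_assoc]
      _ = ENNReal.ofReal (x ^ (-1 - σ) / σ) * Bx := by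
          rw [← ENNReal.ofReal_mul (by positivity), harith]
  -- conclusion via Tonelli
  set I := ∫ x in Set.Ioo (0:ℝ) 1, k x * w' x ^ 2 with hIdef
  have hI0 : 0 ≤ I :=
    setIntegral_nonneg measurableSet_Ioo (fun t ht => mul_nonneg (hkIoo t ht).le (sq_nonneg _))
  have hS : MeasurableSet {p : ℝ × ℝ | 0 < p.2 ∧ p.2 < p.1} :=
    (measurableSet_lt measurable_const measurable_snd).inter
      (measurableSet_lt measurable_snd measurable_fst)
  have hnn : 0 ≤ᵐ[volume.restrict (Set.Ioo (0:ℝ) 1)] fun t => k t * w' t ^ 2 :=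
    (ae_restrict_iff' measurableSet_Ioo).2
      (ae_of_all _ fun t ht => mul_nonneg (hkIoo t ht).le (sq_nonneg _))
  have main : (∫⁻ x in Set.Ioo (0:ℝ) 1, ENNReal.ofReal ((k x / x ^ 2) * w x ^ 2))
      ≤ ENNReal.ofReal (1 / σ ^ 2 * I) := by
    calc ∫⁻ x in Set.Ioo (0:ℝ) 1, ENNReal.ofReal ((k x / x ^ 2) * w x ^ 2)
        ≤ ∫⁻ x in Set.Ioo (0:ℝ) 1,
            ENNReal.ofReal (x ^ (-1 - σ) / σ) * ∫⁻ t in Set.Ioo 0 x, φ₀ t :=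
          setLIntegral_mono' measurableSet_Ioo step1
      _ = ∫⁻ x in Set.Ioo (0:ℝ) 1, ∫⁻ t in Set.Ioo (0:ℝ) 1,
            ENNReal.ofReal (x ^ (-1 - σ) / σ) * (Set.Ioo (0:ℝ) x).indicator φ₀ t := by
          apply setLIntegral_congr_fun measurableSet_Ioo
          intro x hx
          dsimp only
          rw [lintegral_const_mul _ (hφ₀meas.indicator measurableSet_Ioo)]
          congr 1
          rw [lintegral_indicator measurableSet_Ioo, Measure.restrict_restrict measurableSet_Ioo,
            Set.inter_eq_self_of_subset_left (Set.Ioo_subset_Ioo le_rfl hx.2.le)]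
      _ = ∫⁻ t in Set.Ioo (0:ℝ) 1, ∫⁻ x in Set.Ioo (0:ℝ) 1,
            ENNReal.ofReal (x ^ (-1 - σ) / σ) * (Set.Ioo (0:ℝ) x).indicator φ₀ t := by
          apply lintegral_lintegral_swap
          apply Measurable.aemeasurable
          have heq : (Function.uncurry fun x t =>
              ENNReal.ofReal (x ^ (-1 - σ) / σ) * (Set.Ioo (0:ℝ) x).indicator φ₀ t)
              = fun p : ℝ × ℝ => ENNReal.ofReal (p.1 ^ (-1 - σ) / σ) *
                  ({q : ℝ × ℝ | 0 < q.2 ∧ q.2 < q.1}.indicator (fun q => φ₀ q.2) p) := by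
            funext p
            cases p with
            | mk a b =>
              simp only [Function.uncurry, Set.indicator_apply, Set.mem_Ioo, Set.mem_setOf_eq]
          rw [heq]
          exact (hc.comp measurable_fst).mul ((hφ₀meas.comp measurable_snd).indicator hS)
      _ ≤ ∫⁻ t in Set.Ioo (0:ℝ) 1, φ₀ t * ENNReal.ofReal (t ^ (-σ) / σ ^ 2) := by
          apply setLIntegral_mono' measurableSet_Ioo
          intro t ht
          have e1 : ∀ x : ℝ, ENNReal.ofReal (x ^ (-1 - σ) / σ) * (Set.Ioo (0:ℝ) x).indicator φ₀ t
              = (Set.Ioi t).indicator (fun x => φ₀ t * ENNReal.ofReal (x ^ (-1 - σ) / σ)) x := by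
            intro x
            by_cases h : t < x
            · simp [Set.indicator_apply, Set.mem_Ioo, Set.mem_Ioi, h, ht.1, mul_comm]
            · simp [Set.indicator_apply, Set.mem_Ioo, Set.mem_Ioi, h]
          calc ∫⁻ x in Set.Ioo (0:ℝ) 1,
                ENNReal.ofReal (x ^ (-1 - σ) / σ) * (Set.Ioo (0:ℝ) x).indicator φ₀ t
              = ∫⁻ x in Set.Ioo (0:ℝ) 1,
                  (Set.Ioi t).indicator (fun x => φ₀ t * ENNReal.ofReal (x ^ (-1 - σ) / σ)) x :=
                lintegral_congr fun x => e1 x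
            _ = ∫⁻ x in Set.Ioo t 1, φ₀ t * ENNReal.ofReal (x ^ (-1 - σ) / σ) := by
                rw [lintegral_indicator measurableSet_Ioi,
                  Measure.restrict_restrict measurableSet_Ioi]
                congr 2
                ext y
                simp only [Set.mem_inter_iff, Set.mem_Ioi, Set.mem_Ioo]
                constructor
                · rintro ⟨h1, _, h3⟩; exact ⟨h1, h3⟩
                · rintro ⟨h1, h2⟩; exact ⟨h1, ht.1.trans h1, h2⟩
            _ = φ₀ t * ∫⁻ x in Set.Ioo t 1, ENNReal.ofReal (x ^ (-1 - σ) / σ) :=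
                lintegral_const_mul _ hc
            _ ≤ φ₀ t * ENNReal.ofReal (t ^ (-σ) / σ ^ 2) := by
                apply mul_le_mul_right
                have hne2 : (-1 - σ : ℝ) ≠ -1 := by intro h; rw [hσdef] at h; linarith [h]
                have hnotmem : (0:ℝ) ∉ [[t, 1]] := by
                  rw [Set.uIcc_of_le ht.2.le]
                  rintro ⟨h1, -⟩
                  exact absurd h1 (not_le.2 ht.1)
                have hint2 : IntegrableOn (fun x : ℝ => x ^ (-1 - σ) / σ) (Set.Ioo t 1) := by
                  have h1 : IntervalIntegrable (fun x : ℝ => x ^ (-1 - σ)) volume t 1 :=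
                    intervalIntegral.intervalIntegrable_rpow (Or.inr hnotmem)
                  rw [intervalIntegrable_iff, uIoc_of_le ht.2.le] at h1
                  exact (h1.mono_set Set.Ioo_subset_Ioc_self).div_const σ
                have hval : ∫ x in Set.Ioo t 1, x ^ (-1 - σ) / σ = (t ^ (-σ) - 1) / σ ^ 2 := by
                  rw [← integral_Ioc_eq_integral_Ioo, ← intervalIntegral.integral_of_le ht.2.le,
                    intervalIntegral.integral_div, integral_rpow (Or.inr ⟨hne2, hnotmem⟩),
                    show (-1 - σ + 1 : ℝ) = -σ by ring, Real.one_rpow]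
                  field_simp
                  ring
                calc ∫⁻ x in Set.Ioo t 1, ENNReal.ofReal (x ^ (-1 - σ) / σ)
                    = ENNReal.ofReal (∫ x in Set.Ioo t 1, x ^ (-1 - σ) / σ) :=
                      (ofReal_integral_eq_lintegral_ofReal hint2
                        ((ae_restrict_iff' measurableSet_Ioo).2 (ae_of_all _ fun y hy =>
                          div_nonneg (Real.rpow_pos_of_pos (ht.1.trans hy.1) _).le hσ.le))).symm
                  _ ≤ ENNReal.ofReal (t ^ (-σ) / σ ^ 2) := by
                      apply ENNReal.ofReal_le_ofReal
                      rw [hval]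
                      gcongr
                      linarith
      _ ≤ ENNReal.ofReal (1 / σ ^ 2) * ∫⁻ t in Set.Ioo (0:ℝ) 1, ENNReal.ofReal (k t * w' t ^ 2) := by
          rw [← lintegral_const_mul' _ _ (show ENNReal.ofReal (1 / σ ^ 2) ≠ ⊤ from ENNReal.ofReal_ne_top)]
          apply lintegral_mono_ae
          filter_upwards [hφ₀eq, ae_restrict_mem measurableSet_Ioo] with t heq hmem
          rw [← heq]
          have hkt : 0 < k t := hkIoo t hmem
          have htσ : (t : ℝ) ^ σ * t ^ (-σ) = 1 := by
            rw [← Real.rpow_add hmem.1]; simp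
          rw [← ENNReal.ofReal_mul (mul_nonneg (mul_nonneg hkt.le (sq_nonneg _))
              (Real.rpow_pos_of_pos hmem.1 σ).le),
            ← ENNReal.ofReal_mul (by positivity : (0:ℝ) ≤ 1 / σ ^ 2)]
          apply ENNReal.ofReal_le_ofReal
          have : k t * w' t ^ 2 * t ^ σ * (t ^ (-σ) / σ ^ 2) = 1 / σ ^ 2 * (k t * w' t ^ 2) := by
            field_simp
            linear_combination (w' t ^ 2) * htσ
          rw [this]
      _ = ENNReal.ofReal (1 / σ ^ 2 * I) := by
          rw [← ofReal_integral_eq_lintegral_ofReal hint hnn,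
            ← ENNReal.ofReal_mul (by positivity)]
  -- convert back to Bochner integrals
  have hnnL : 0 ≤ᵐ[volume.restrict (Set.Ioo (0:ℝ) 1)] fun x => (k x / x ^ 2) * w x ^ 2 :=
    (ae_restrict_iff' measurableSet_Ioo).2 (ae_of_all _ fun x hx =>
      mul_nonneg (div_nonneg (hkIoo x hx).le (sq_nonneg _)) (sq_nonneg _))
  have hmL : AEStronglyMeasurable (fun x => (k x / x ^ 2) * w x ^ 2)
      (volume.restrict (Set.Ioo (0:ℝ) 1)) :=
    ((hkm.div ((measurable_id.pow_const 2).aemeasurable)).mul (hwm.pow_const 2)).aestronglyMeasurable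
  rw [integral_eq_lintegral_of_nonneg_ae hnnL hmL]
  calc (∫⁻ x in Set.Ioo (0:ℝ) 1, ENNReal.ofReal ((k x / x ^ 2) * w x ^ 2)).toReal
      ≤ (ENNReal.ofReal (1 / σ ^ 2 * I)).toReal :=
        ENNReal.toReal_mono ENNReal.ofReal_ne_top main
    _ = 1 / σ ^ 2 * I := ENNReal.toReal_ofReal (mul_nonneg (by positivity) hI0)
end
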